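/- arXiv:0805.0550 — 2 statements merged into one kernel-verified Lean document; each statement's English description precedes it below -/
import Mathlib

section
/- Interface identity for the scheme with interface unknowns (per interface face): let (δ_m, δ_e) be either (δt₁, δt₂) or (δt₂, δt₁). Suppose u^m, p^m, 𝒰 ∈ P₀^{δ_m} and u^e, p^e, 𝒫 ∈ P₀^{δ_e} satisfy the perturbed transmission conditions u^m = Q^{δ_m}(−u^e) + 𝒰 and p^e = Q^{δ_e}(p^m) + 𝒫. Then ⟨u^m, p^m⟩_{L²(0,T)} + ⟨u^e, p^e⟩_{L²(0,T)} = ⟨𝒰, p^m⟩_{L²(0,T)} + ⟨u^e, 𝒫⟩_{L²(0,T)}. -/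
open MeasureTheory

/-- `L²((0,T); ℝ)`. -/
noncomputable abbrev L2T (T : ℝ) : Type :=
  Lp ℝ 2 (volume.restrict (Set.Ioo (0 : ℝ) T))

/-- `P₀^δ`: the subspace of `L²((0,T);ℝ)` of functions that are a.e. constant on each
interval `((n-1)δ, nδ)`, `n = 1, …, N`. -/
def P0 (δ T : ℝ) (N : ℕ) : Set (L2T T) :=
  {f : L2T T | ∀ n ∈ Finset.Icc 1 N, ∃ c : ℝ,
    ∀ᵐ t ∂(volume.restrict (Set.Ioo (((n : ℝ) - 1) * δ) ((n : ℝ) * δ))), f t = c}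

/-- `Q` is the `L²`-orthogonal projection of `L²((0,T);ℝ)` onto `P₀^δ`. -/
def IsL2Proj (δ T : ℝ) (N : ℕ) (Q : L2T T → L2T T) : Prop :=
  ∀ v : L2T T, Q v ∈ P0 δ T N ∧ ∀ w ∈ P0 δ T N, (inner ℝ (v - Q v) w : ℝ) = 0

/-- Interface identity for the scheme with interface unknowns (per interface face):
with `(δm, δe)` either `(δt₁, δt₂)` or `(δt₂, δt₁)`, if
`u^m = Q^{δm}(−u^e) + 𝒰` and `p^e = Q^{δe}(p^m) + 𝒫`, then
`⟨u^m, p^m⟩ + ⟨u^e, p^e⟩ = ⟨𝒰, p^m⟩ + ⟨u^e, 𝒫⟩` in `L²(0,T)`. -/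
theorem interface_identity_IS1
    (δt1 : ℝ) (hδt1 : 0 < δt1) (K : ℕ) (hK : 1 ≤ K)
    (δt2 : ℝ) (hδt2 : δt2 = (K : ℝ) * δt1)
    (N2 : ℕ) (hN2 : 1 ≤ N2) (T : ℝ) (hT : T = (N2 : ℝ) * δt2)
    (δm δe : ℝ) (Nm Ne : ℕ)
    (hcase : (δm = δt1 ∧ Nm = N2 * K ∧ δe = δt2 ∧ Ne = N2)
           ∨ (δm = δt2 ∧ Nm = N2 ∧ δe = δt1 ∧ Ne = N2 * K))
    (Qm Qe : L2T T → L2T T)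
    (hQm : IsL2Proj δm T Nm Qm) (hQe : IsL2Proj δe T Ne Qe)
    (um pm calU : L2T T) (ue pe calP : L2T T)
    (hum : um ∈ P0 δm T Nm) (hpm : pm ∈ P0 δm T Nm) (hcalU : calU ∈ P0 δm T Nm)
    (hue : ue ∈ P0 δe T Ne) (hpe : pe ∈ P0 δe T Ne) (hcalP : calP ∈ P0 δe T Ne)
    (htrans1 : um = Qm (-ue) + calU)
    (htrans2 : pe = Qe pm + calP) :
    (inner ℝ um pm : ℝ) + (inner ℝ ue pe : ℝ)
      = (inner ℝ calU pm : ℝ) + (inner ℝ ue calP : ℝ) := by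
  subst htrans1 htrans2
  rw [inner_add_left, inner_add_right]
  have hA : (inner ℝ (Qm (-ue)) pm : ℝ) = - inner ℝ ue pm := by
    have h := (hQm (-ue)).2 pm hpm
    rw [inner_sub_left, inner_neg_left] at h
    linarith
  have hB : (inner ℝ ue (Qe pm) : ℝ) = inner ℝ ue pm := by
    have h := (hQe pm).2 ue hue
    rw [inner_sub_left] at h
    have h1 := real_inner_comm ue (Qe pm)
    have h2 := real_inner_comm ue pm
    linarith
  rw [hA, hB]
  ring
end

section
/- Interface inequality for the overlapping scheme (per interface face): let (δ_m, δ_e) be either (δt₁, δt₂) or (δt₂, δt₁), and let d^m ≥ 0 and d^e be real numbers. Suppose u^m, p^m, 𝒰, U^m ∈ P₀^{δ_m} and u^e, p^e, 𝒫, U^e ∈ P₀^{δ_e} satisfy the perturbed transmission conditions u^m = Q^{δ_m}(−u^e) + 𝒰 and p^e + d^m u^e = Q^{δ_e}(p^m − d^m u^m + d^m U^m) + 𝒫 − d^e U^e. Then ⟨u^m, p^m⟩_{L²(0,T)} + ⟨u^e, p^e⟩_{L²(0,T)} ≤ ⟨𝒰, p^m⟩_{L²(0,T)} + ⟨u^e,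 𝒫 − d^e U^e − d^m (𝒰 − U^m)⟩_{L²(0,T)}. -/
open MeasureTheory

/-- Interface inequality for the overlapping scheme (per interface face):
with `(δm, δe)` either `(δt₁, δt₂)` or `(δt₂, δt₁)`, `d^m ≥ 0`, `d^e ∈ ℝ`, if
`u^m = Q^{δm}(−u^e) + 𝒰` and
`p^e + d^m u^e = Q^{δe}(p^m − d^m u^m + d^m U^m) + 𝒫 − d^e U^e`, then
`⟨u^m, p^m⟩ + ⟨u^e, p^e⟩ ≤ ⟨𝒰, p^m⟩ + ⟨u^e, 𝒫 − d^e U^e − d^m(𝒰 − U^m)⟩` in `L²(0,T)`. -/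
theorem interface_inequality_IS2
    (δt1 : ℝ) (hδt1 : 0 < δt1) (K : ℕ) (hK : 1 ≤ K)
    (δt2 : ℝ) (hδt2 : δt2 = (K : ℝ) * δt1)
    (N2 : ℕ) (hN2 : 1 ≤ N2) (T : ℝ) (hT : T = (N2 : ℝ) * δt2)
    (δm δe : ℝ) (Nm Ne : ℕ)
    (hcase : (δm = δt1 ∧ Nm = N2 * K ∧ δe = δt2 ∧ Ne = N2)
           ∨ (δm = δt2 ∧ Nm = N2 ∧ δe = δt1 ∧ Ne = N2 * K))
    (dm de : ℝ) (hdm : 0 ≤ dm)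
    (Qm Qe : L2T T → L2T T)
    (hQm : IsL2Proj δm T Nm Qm) (hQe : IsL2Proj δe T Ne Qe)
    (um pm calU Um : L2T T) (ue pe calP Ue : L2T T)
    (hum : um ∈ P0 δm T Nm) (hpm : pm ∈ P0 δm T Nm)
    (hcalU : calU ∈ P0 δm T Nm) (hUm : Um ∈ P0 δm T Nm)
    (hue : ue ∈ P0 δe T Ne) (hpe : pe ∈ P0 δe T Ne)
    (hcalP : calP ∈ P0 δe T Ne) (hUe : Ue ∈ P0 δe T Ne)
    (htrans1 : um = Qm (-ue) + calU)
    (htrans2 : pe + dm • ue = Qe (pm - dm • um + dm • Um) + calP - de • Ue) :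
    (inner ℝ um pm : ℝ) + (inner ℝ ue pe : ℝ)
      ≤ (inner ℝ calU pm : ℝ) + (inner ℝ ue (calP - de • Ue - dm • (calU - Um)) : ℝ) := by
  obtain ⟨hqmem, hq⟩ := hQm (-ue)
  obtain ⟨hwmem, hw⟩ := hQe (pm - dm • um + dm • Um)
  set q := Qm (-ue) with hqdef
  set w := Qe (pm - dm • um + dm • Um) with hwdef
  have hA : (inner ℝ (-ue - q) pm : ℝ) = 0 := hq pm hpm
  have hB : (inner ℝ (-ue - q) q : ℝ) = 0 := hq q hqmem
  have hC : (inner ℝ (pm - dm • um + dm • Um - w) ue : ℝ) = 0 := hw ue hue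
  have hpe2 : pe = w + calP - de • Ue - dm • ue := by
    rw [← htrans2]; abel
  have hpos : (0:ℝ) ≤ inner ℝ (ue + q) (ue + q) := real_inner_self_nonneg
  rw [htrans1, hpe2]
  simp only [inner_add_left, inner_add_right, inner_sub_left, inner_sub_right,
    inner_neg_left, inner_neg_right, real_inner_smul_left, real_inner_smul_right] at *
  have h1 : (inner ℝ q pm : ℝ) = - inner ℝ ue pm := by linarith
  have h2 : (inner ℝ q q : ℝ) = - inner ℝ ue q := by linarith
  have h3 : (inner ℝ ue q : ℝ) = inner ℝ q ue := real_inner_comm _ _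
  have h4 : (inner ℝ ue um : ℝ) = inner ℝ um ue := real_inner_comm _ _
  have h5 : (inner ℝ ue Um : ℝ) = inner ℝ Um ue := real_inner_comm _ _
  have h6 : (inner ℝ ue pm : ℝ) = inner ℝ pm ue := real_inner_comm _ _
  have h7 : (inner ℝ ue w : ℝ) = inner ℝ w ue := real_inner_comm _ _
  have h8 : (inner ℝ ue calU : ℝ) = inner ℝ calU ue := real_inner_comm _ _
  rw [htrans1] at hC
  simp only [inner_add_left, inner_add_right, inner_smul_left, inner_smul_right,
    real_inner_smul_left, real_inner_smul_right, mul_add] at hC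
  nlinarith [mul_nonneg hdm hpos]
end
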